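/- Let f : ℝ³ → ℂ be continuously differentiable and compactly supported, and let v_f(t,x) := (1/4π) ∫_{S²} [ f(x+tω) + t ω·∇f(x+tω) ] dσ(ω) be the free cosine wave propagator applied to f. Then for every x ∈ ℝ³, ∫_0^∞ t |v_f(t,x)| dt ≤ (1/4π) ( ∫_{ℝ³} |f(y)|/|x−y| dy + ‖∇f‖_{L¹(ℝ³)} ) ≤ (1/2π) ‖∇f‖_{L¹(ℝ³)}; that is, ‖ t · cos(t√(−Δ)) f ‖_{L^∞_x L¹_t} ≲ ‖∇f‖_{L¹}. -/

import Mathlib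

set_option autoImplicit false

open MeasureTheory ENNReal Real

noncomputable section

/-- `ℝ³` as a Euclidean space. -/
abbrev R3 : Type := EuclideanSpace ℝ (Fin 3)

/-- The surface measure on the unit sphere `S² ⊂ ℝ³`. -/
def sphereMeasure : Measure (Metric.sphere (0 : R3) 1) :=
  (volume : Measure R3).toSphere

/-- The free cosine wave propagator (Kirchhoff formula):
`v_f(t,x) = (1/4π) ∫_{S²} [f(x+tω) + t ω·∇f(x+tω)] dσ(ω)`. -/
def cosProp (f : R3 → ℂ) (t : ℝ) (x : R3) : ℂ :=
  (1 / (4 * π)) • ∫ ω : Metric.sphere (0 : R3) 1,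
    (f (x + t • (ω : R3)) + t • (fderiv ℝ f (x + t • (ω : R3))) (ω : R3)) ∂sphereMeasure

open Set Metric

lemma finrank_R3 : Module.finrank ℝ R3 = 3 := by
  simp [R3]

lemma polar_lintegral (g : R3 → ℝ≥0∞) (hg : Measurable g) :
    ∫⁻ y, g y = ∫⁻ ω, ∫⁻ r in Set.Ioi (0:ℝ),
      ENNReal.ofReal (r^2) * g (r • (ω:R3)) ∂volume ∂sphereMeasure := by
  have h := Measure.measurePreserving_homeomorphUnitSphereProd (volume : Measure R3)
  have hd : Module.finrank ℝ R3 - 1 = 2 := by rw [finrank_R3]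
  rw [hd] at h
  set G : Metric.sphere (0:R3) 1 × Set.Ioi (0:ℝ) → ℝ≥0∞ := fun p => g (p.2.1 • p.1.1) with hG
  have hGm : Measurable G :=
    hg.comp ((measurable_subtype_coe.comp measurable_snd).smul
      (measurable_subtype_coe.comp measurable_fst))
  have step1 : ∫⁻ y, g y ∂(volume : Measure R3)
      = ∫⁻ x : ({(0:R3)}ᶜ : Set R3), g x ∂((volume : Measure R3).comap Subtype.val) := by
    rw [lintegral_subtype_comap (measurableSet_singleton _).compl,
      MeasureTheory.restrict_compl_singleton]
  have step2 : ∫⁻ x : ({(0:R3)}ᶜ : Set R3), g x ∂((volume : Measure R3).comap Subtype.val)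
      = ∫⁻ p, G p ∂((volume : Measure R3).toSphere.prod (Measure.volumeIoiPow 2)) := by
    rw [← h.map_eq, lintegral_map hGm (homeomorphUnitSphereProd R3).measurable]
    refine lintegral_congr fun x => ?_
    simp only [hG]
    congr 1
    simp [smul_inv_smul₀ (norm_ne_zero_iff.2 x.2)]
  have step3 : ∫⁻ p, G p ∂((volume : Measure R3).toSphere.prod (Measure.volumeIoiPow 2))
      = ∫⁻ ω, ∫⁻ r in Set.Ioi (0:ℝ),
        ENNReal.ofReal (r^2) * g (r • (ω:R3)) ∂volume ∂sphereMeasure := by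
    rw [lintegral_prod _ hGm.aemeasurable]
    refine lintegral_congr fun ω => ?_
    rw [Measure.volumeIoiPow,
      lintegral_withDensity_eq_lintegral_mul _
        (f := fun r : Set.Ioi (0:ℝ) => ENNReal.ofReal (r.1 ^ 2)) (by fun_prop)
        (g := fun y => G (ω, y)) (hGm.comp measurable_prodMk_left)]
    simp only [Pi.mul_apply, hG]
    exact lintegral_subtype_comap measurableSet_Ioi
      (fun r : ℝ => ENNReal.ofReal (r ^ 2) * g (r • (ω:R3)))
  rw [step1, step2, step3]

lemma lintegral_translate (g : R3 → ℝ≥0∞) (hg : Measurable g) (x : R3) :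
    ∫⁻ y, g (x + y) = ∫⁻ y, g y :=
  (measurePreserving_add_left (volume : Measure R3) x).lintegral_comp hg

lemma deriv_ray (f : R3 → ℂ) (hf : ContDiff ℝ 1 f) (x ω : R3) (s : ℝ) :
    HasDerivAt (fun s : ℝ => f (x + s • ω)) ((fderiv ℝ f (x + s • ω)) ω) s := by
  have h1 : HasDerivAt (fun s : ℝ => x + s • ω) ω s := by
    simpa using ((hasDerivAt_id s).smul_const ω).const_add x
  exact ((hf.differentiable one_ne_zero (x + s • ω)).hasFDerivAt).comp_hasDerivAt s h1

lemma cont_Df_ray (f : R3 → ℂ) (hf : ContDiff ℝ 1 f) (x ω : R3) :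
    Continuous (fun s : ℝ => (fderiv ℝ f (x + s • ω)) ω) := by
  have h1 : Continuous (fun s : ℝ => fderiv ℝ f (x + s • ω)) :=
    (hf.continuous_fderiv one_ne_zero).comp (by fun_prop)
  exact h1.clm_apply continuous_const

lemma ray_bound (f : R3 → ℂ) (hf : ContDiff ℝ 1 f) (hsupp : HasCompactSupport f)
    (x ω : R3) (hω : ‖ω‖ = 1) (r : ℝ) :
    ENNReal.ofReal ‖f (x + r • ω)‖ ≤
      ∫⁻ s in Set.Ioi r, ENNReal.ofReal ‖(fderiv ℝ f (x + s • ω)) ω‖ := by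
  obtain ⟨M, hM⟩ := (hsupp.isBounded).subset_closedBall 0
  set R : ℝ := max r 0 + ‖x‖ + max M 0 + 1 with hR
  have hrR : r ≤ R := by
    have := le_max_left r 0
    have := norm_nonneg x
    have := le_max_right M 0
    linarith
  have hfR : f (x + R • ω) = 0 := by
    apply image_eq_zero_of_notMem_tsupport
    intro hmem
    have h2 := hM hmem
    rw [Metric.mem_closedBall, dist_zero_right] at h2
    have h3 : ‖R • ω‖ ≤ ‖x + R • ω‖ + ‖x‖ := by
      calc ‖R • ω‖ = ‖(x + R • ω) - x‖ := by congr 1; abel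
        _ ≤ ‖x + R • ω‖ + ‖x‖ := norm_sub_le _ _
    have h4 : ‖R • ω‖ = R := by
      rw [norm_smul, hω, mul_one, Real.norm_eq_abs, abs_of_pos]
      positivity
    have := le_max_left M 0
    have := le_max_right r 0
    rw [h4] at h3
    linarith
  have hderiv : ∀ s ∈ Set.uIcc r R, HasDerivAt (fun s : ℝ => f (x + s • ω))
      ((fderiv ℝ f (x + s • ω)) ω) s := fun s _ => deriv_ray f hf x ω s
  have hint : IntervalIntegrable (fun s : ℝ => (fderiv ℝ f (x + s • ω)) ω) volume r R :=
    (cont_Df_ray f hf x ω).intervalIntegrable r R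
  have key : ∫ s in r..R, (fderiv ℝ f (x + s • ω)) ω = f (x + R • ω) - f (x + r • ω) :=
    intervalIntegral.integral_eq_sub_of_hasDerivAt hderiv hint
  have h5 : ‖f (x + r • ω)‖ = ‖∫ s in r..R, (fderiv ℝ f (x + s • ω)) ω‖ := by
    rw [key, hfR, zero_sub, norm_neg]
  have h6 : ‖∫ s in r..R, (fderiv ℝ f (x + s • ω)) ω‖
      ≤ ∫ s in r..R, ‖(fderiv ℝ f (x + s • ω)) ω‖ :=
    intervalIntegral.norm_integral_le_integral_norm hrR
  have h7 : ∫ s in r..R, ‖(fderiv ℝ f (x + s • ω)) ω‖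
      = ∫ s in Set.Ioc r R, ‖(fderiv ℝ f (x + s • ω)) ω‖ :=
    intervalIntegral.integral_of_le hrR
  calc ENNReal.ofReal ‖f (x + r • ω)‖
      ≤ ENNReal.ofReal (∫ s in Set.Ioc r R, ‖(fderiv ℝ f (x + s • ω)) ω‖) := by
        apply ENNReal.ofReal_le_ofReal
        rw [h5, ← h7]; exact h6
    _ = ∫⁻ s in Set.Ioc r R, ENNReal.ofReal ‖(fderiv ℝ f (x + s • ω)) ω‖ := by
        apply ofReal_integral_eq_lintegral_ofReal
        · exact ((cont_Df_ray f hf x ω).norm.integrableOn_Ioc)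
        · exact Filter.Eventually.of_forall fun s => norm_nonneg _
    _ ≤ ∫⁻ s in Set.Ioi r, ENNReal.ofReal ‖(fderiv ℝ f (x + s • ω)) ω‖ :=
        lintegral_mono_set Set.Ioc_subset_Ioi_self

lemma tonelli_ray (H : ℝ → ℝ≥0∞) (hH : Measurable H) :
    ∫⁻ r in Set.Ioi (0:ℝ), ENNReal.ofReal r * ∫⁻ s in Set.Ioi r, H s ≤
      ∫⁻ s in Set.Ioi (0:ℝ), ENNReal.ofReal (s^2) * H s := by
  set K : ℝ → ℝ → ℝ≥0∞ := fun r s => if r < s then ENNReal.ofReal r * H s else 0 with hK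
  have hKm : Measurable (Function.uncurry K) := by
    apply Measurable.ite (measurableSet_lt measurable_fst measurable_snd)
    · exact (measurable_fst.ennreal_ofReal).mul (hH.comp measurable_snd)
    · exact measurable_const
  have step1 : ∀ r ∈ Set.Ioi (0:ℝ),
      ENNReal.ofReal r * ∫⁻ s in Set.Ioi r, H s = ∫⁻ s in Set.Ioi (0:ℝ), K r s := by
    intro r hr
    have : ∀ s, K r s = (Set.Ioi r).indicator (fun s => ENNReal.ofReal r * H s) s := by
      intro s
      by_cases h : r < s
      · rw [hK]; simp only [h, if_true, Set.indicator_of_mem (Set.mem_Ioi.2 h)]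
      · rw [hK]; simp only [h, if_false,
          Set.indicator_of_notMem (fun hs => h (Set.mem_Ioi.1 hs))]
    simp only [this]
    rw [lintegral_indicator measurableSet_Ioi, Measure.restrict_restrict measurableSet_Ioi,
      Set.inter_eq_self_of_subset_left (Set.Ioi_subset_Ioi (le_of_lt hr)),
      lintegral_const_mul' _ _ ENNReal.ofReal_ne_top]
  have step3 : ∀ s ∈ Set.Ioi (0:ℝ),
      (∫⁻ r in Set.Ioi (0:ℝ), K r s) ≤ ENNReal.ofReal (s^2) * H s := by
    intro s hs
    have : ∀ r, K r s = (Set.Iio s).indicator (fun r => ENNReal.ofReal r * H s) r := by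
      intro r
      by_cases h : r < s
      · rw [hK]; simp only [h, if_true, Set.indicator_of_mem (Set.mem_Iio.2 h)]
      · rw [hK]; simp only [h, if_false,
          Set.indicator_of_notMem (fun hr => h (Set.mem_Iio.1 hr))]
    simp only [this]
    rw [lintegral_indicator measurableSet_Iio, Measure.restrict_restrict measurableSet_Iio,
      Set.Iio_inter_Ioi]
    calc ∫⁻ r in Set.Ioo (0:ℝ) s, ENNReal.ofReal r * H s
        ≤ ∫⁻ _ in Set.Ioo (0:ℝ) s, ENNReal.ofReal s * H s := by
          apply setLIntegral_mono' measurableSet_Ioo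
          intro r hr
          exact mul_le_mul_left (ENNReal.ofReal_le_ofReal hr.2.le) _
      _ = ENNReal.ofReal s * H s * volume (Set.Ioo (0:ℝ) s) := setLIntegral_const _ _
      _ ≤ ENNReal.ofReal (s^2) * H s := by
          rw [Real.volume_Ioo, sub_zero, mul_comm (ENNReal.ofReal s * H s),
            ← mul_assoc, ← ENNReal.ofReal_mul (le_of_lt hs), ← sq]
  calc ∫⁻ r in Set.Ioi (0:ℝ), ENNReal.ofReal r * ∫⁻ s in Set.Ioi r, H s
      = ∫⁻ r in Set.Ioi (0:ℝ), ∫⁻ s in Set.Ioi (0:ℝ), K r s := by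
        apply setLIntegral_congr_fun measurableSet_Ioi
        exact step1
    _ = ∫⁻ s in Set.Ioi (0:ℝ), ∫⁻ r in Set.Ioi (0:ℝ), K r s :=
        lintegral_lintegral_swap hKm.aemeasurable
    _ ≤ ∫⁻ s in Set.Ioi (0:ℝ), ENNReal.ofReal (s^2) * H s := by
        apply setLIntegral_mono' measurableSet_Ioi
        exact step3

lemma pot_meas (f : R3 → ℂ) (hf : ContDiff ℝ 1 f) (x : R3) :
    Measurable (fun y : R3 => ENNReal.ofReal (‖f y‖ / ‖x - y‖)) :=
  ((hf.continuous.norm.measurable).div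
    ((continuous_const.sub continuous_id).norm.measurable)).ennreal_ofReal

lemma pot_translate (f : R3 → ℂ) (hf : ContDiff ℝ 1 f) (x : R3) :
    ∫⁻ z : R3, ENNReal.ofReal (‖f (x + z)‖ / ‖z‖)
      = ∫⁻ y : R3, ENNReal.ofReal (‖f y‖ / ‖x - y‖) := by
  rw [← lintegral_translate _ (pot_meas f hf x) x]
  refine lintegral_congr fun z => ?_
  have : x - (x + z) = -z := by abel
  rw [this, norm_neg]

lemma Df_translate (f : R3 → ℂ) (hf : ContDiff ℝ 1 f) (x : R3) :
    ∫⁻ z : R3, ENNReal.ofReal ‖fderiv ℝ f (x + z)‖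
      = ∫⁻ y : R3, ENNReal.ofReal ‖fderiv ℝ f y‖ :=
  lintegral_translate _ ((hf.continuous_fderiv one_ne_zero).norm.measurable.ennreal_ofReal) x

lemma key_pot (f : R3 → ℂ) (hf : ContDiff ℝ 1 f) (hsupp : HasCompactSupport f) (x : R3) :
    ∫⁻ y : R3, ENNReal.ofReal (‖f y‖ / ‖x - y‖)
      ≤ ∫⁻ y : R3, ENNReal.ofReal ‖fderiv ℝ f y‖ := by
  have hDf : Continuous (fderiv ℝ f) := hf.continuous_fderiv one_ne_zero
  set g1 : R3 → ℝ≥0∞ := fun z => ENNReal.ofReal (‖f (x + z)‖ / ‖z‖) with hg1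
  set g2 : R3 → ℝ≥0∞ := fun z => ENNReal.ofReal ‖fderiv ℝ f (x + z)‖ with hg2
  have hg1m : Measurable g1 :=
    ((hf.continuous.norm.comp (continuous_const.add continuous_id)).measurable.div
      continuous_norm.measurable).ennreal_ofReal
  have hg2m : Measurable g2 :=
    ((hDf.norm.comp (continuous_const.add continuous_id)).measurable).ennreal_ofReal
  rw [← pot_translate f hf x, ← Df_translate f hf x, polar_lintegral g1 hg1m,
    polar_lintegral g2 hg2m]
  refine lintegral_mono fun ω => ?_
  have hω : ‖(ω : R3)‖ = 1 := mem_sphere_zero_iff_norm.1 ω.2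
  have hH : Measurable (fun s : ℝ => ENNReal.ofReal ‖fderiv ℝ f (x + s • (ω:R3))‖) :=
    ((hDf.norm.comp (by fun_prop)).measurable).ennreal_ofReal
  calc ∫⁻ r in Set.Ioi (0:ℝ), ENNReal.ofReal (r^2) * g1 (r • (ω:R3))
      = ∫⁻ r in Set.Ioi (0:ℝ), ENNReal.ofReal r * ENNReal.ofReal ‖f (x + r • (ω:R3))‖ := by
        refine setLIntegral_congr_fun measurableSet_Ioi ?_
        intro r hr
        have hrpos : (0:ℝ) < r := hr
        have hnr : ‖r • (ω:R3)‖ = r := by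
          rw [norm_smul, hω, mul_one, Real.norm_eq_abs, abs_of_pos hrpos]
        rw [hg1]
        simp only [hnr]
        rw [← ENNReal.ofReal_mul (by positivity), ← ENNReal.ofReal_mul hrpos.le]
        congr 1
        field_simp
    _ ≤ ∫⁻ r in Set.Ioi (0:ℝ), ENNReal.ofReal r *
          ∫⁻ s in Set.Ioi r, ENNReal.ofReal ‖fderiv ℝ f (x + s • (ω:R3))‖ := by
        refine setLIntegral_mono' measurableSet_Ioi fun r _ => ?_
        refine mul_le_mul_right ?_ _
        refine (ray_bound f hf hsupp x ω hω r).trans (lintegral_mono fun s => ?_)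
        refine ENNReal.ofReal_le_ofReal ?_
        calc ‖(fderiv ℝ f (x + s • (ω:R3))) (ω:R3)‖
            ≤ ‖fderiv ℝ f (x + s • (ω:R3))‖ * ‖(ω:R3)‖ :=
              (fderiv ℝ f (x + s • (ω:R3))).le_opNorm _
          _ = ‖fderiv ℝ f (x + s • (ω:R3))‖ := by rw [hω, mul_one]
    _ ≤ ∫⁻ s in Set.Ioi (0:ℝ), ENNReal.ofReal (s^2) *
          ENNReal.ofReal ‖fderiv ℝ f (x + s • (ω:R3))‖ := tonelli_ray _ hH
    _ = ∫⁻ r in Set.Ioi (0:ℝ), ENNReal.ofReal (r^2) * g2 (r • (ω:R3)) := rfl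

lemma int_Df (f : R3 → ℂ) (hf : ContDiff ℝ 1 f) (hsupp : HasCompactSupport f) :
    Integrable (fun y : R3 => ‖fderiv ℝ f y‖) :=
  ((hf.continuous_fderiv one_ne_zero).norm).integrable_of_hasCompactSupport (hsupp.fderiv ℝ).norm

lemma lint_Df_eq (f : R3 → ℂ) (hf : ContDiff ℝ 1 f) (hsupp : HasCompactSupport f) :
    ∫⁻ y : R3, ENNReal.ofReal ‖fderiv ℝ f y‖
      = ENNReal.ofReal (∫ y : R3, ‖fderiv ℝ f y‖) :=
  (ofReal_integral_eq_lintegral_ofReal (int_Df f hf hsupp)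
    (Filter.Eventually.of_forall fun y => norm_nonneg _)).symm

lemma int_pot (f : R3 → ℂ) (hf : ContDiff ℝ 1 f) (hsupp : HasCompactSupport f) (x : R3) :
    Integrable (fun y : R3 => ‖f y‖ / ‖x - y‖) := by
  have hmeas : Measurable (fun y : R3 => ‖f y‖ / ‖x - y‖) :=
    (hf.continuous.norm.measurable).div ((continuous_const.sub continuous_id).norm.measurable)
  have hnn : ∀ y : R3, 0 ≤ ‖f y‖ / ‖x - y‖ := fun y => div_nonneg (norm_nonneg _) (norm_nonneg _)
  refine ⟨hmeas.aestronglyMeasurable, ?_⟩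
  have : ∫⁻ y : R3, ‖(‖f y‖ / ‖x - y‖)‖ₑ
      = ∫⁻ y : R3, ENNReal.ofReal (‖f y‖ / ‖x - y‖) :=
    lintegral_congr fun y => Real.enorm_eq_ofReal (hnn y)
  rw [HasFiniteIntegral, this]
  exact lt_of_le_of_lt (key_pot f hf hsupp x)
    (by rw [lint_Df_eq f hf hsupp]; exact ENNReal.ofReal_lt_top)

lemma lint_pot_eq (f : R3 → ℂ) (hf : ContDiff ℝ 1 f) (hsupp : HasCompactSupport f) (x : R3) :
    ∫⁻ y : R3, ENNReal.ofReal (‖f y‖ / ‖x - y‖)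
      = ENNReal.ofReal (∫ y : R3, ‖f y‖ / ‖x - y‖) :=
  (ofReal_integral_eq_lintegral_ofReal (int_pot f hf hsupp x)
    (Filter.Eventually.of_forall fun y => div_nonneg (norm_nonneg _) (norm_nonneg _))).symm

lemma pot_le (f : R3 → ℂ) (hf : ContDiff ℝ 1 f) (hsupp : HasCompactSupport f) (x : R3) :
    ∫ y : R3, ‖f y‖ / ‖x - y‖ ≤ ∫ y : R3, ‖fderiv ℝ f y‖ := by
  rw [← ENNReal.ofReal_le_ofReal_iff (integral_nonneg fun y => norm_nonneg _),
    ← lint_pot_eq f hf hsupp x, ← lint_Df_eq f hf hsupp]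
  exact key_pot f hf hsupp x

instance : IsFiniteMeasure sphereMeasure := by unfold sphereMeasure; infer_instance

lemma J1_eq (f : R3 → ℂ) (hf : ContDiff ℝ 1 f) (x : R3) :
    ∫⁻ ω : Metric.sphere (0:R3) 1, (∫⁻ t in Set.Ioi (0:ℝ),
        ENNReal.ofReal (t * ‖f (x + t • (ω:R3))‖) ∂volume) ∂sphereMeasure
      = ∫⁻ y : R3, ENNReal.ofReal (‖f y‖ / ‖x - y‖) := by
  set g1 : R3 → ℝ≥0∞ := fun z => ENNReal.ofReal (‖f (x + z)‖ / ‖z‖) with hg1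
  have hg1m : Measurable g1 :=
    ((hf.continuous.norm.comp (continuous_const.add continuous_id)).measurable.div
      continuous_norm.measurable).ennreal_ofReal
  rw [← pot_translate f hf x, polar_lintegral g1 hg1m]
  refine lintegral_congr fun ω => ?_
  have hω : ‖(ω : R3)‖ = 1 := mem_sphere_zero_iff_norm.1 ω.2
  refine setLIntegral_congr_fun measurableSet_Ioi (fun t ht => ?_)
  have htpos : (0:ℝ) < t := ht
  have hnr : ‖t • (ω:R3)‖ = t := by
    rw [norm_smul, hω, mul_one, Real.norm_eq_abs, abs_of_pos htpos]
  rw [hg1]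
  simp only [hnr]
  rw [← ENNReal.ofReal_mul (by positivity)]
  congr 1
  field_simp

lemma J2_eq (f : R3 → ℂ) (hf : ContDiff ℝ 1 f) (x : R3) :
    ∫⁻ ω : Metric.sphere (0:R3) 1, (∫⁻ t in Set.Ioi (0:ℝ),
        ENNReal.ofReal (t^2 * ‖fderiv ℝ f (x + t • (ω:R3))‖) ∂volume) ∂sphereMeasure
      = ∫⁻ y : R3, ENNReal.ofReal ‖fderiv ℝ f y‖ := by
  set g2 : R3 → ℝ≥0∞ := fun z => ENNReal.ofReal ‖fderiv ℝ f (x + z)‖ with hg2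
  have hg2m : Measurable g2 :=
    (((hf.continuous_fderiv one_ne_zero).norm.comp
      (continuous_const.add continuous_id)).measurable).ennreal_ofReal
  rw [← Df_translate f hf x, polar_lintegral g2 hg2m]
  refine lintegral_congr fun ω => ?_
  refine setLIntegral_congr_fun measurableSet_Ioi (fun t ht => ?_)
  rw [hg2, ENNReal.ofReal_mul (sq_nonneg t)]

lemma cos_pointwise (f : R3 → ℂ) (hf : ContDiff ℝ 1 f) (x : R3) {t : ℝ} (ht : 0 < t) :
    ENNReal.ofReal t * (‖cosProp f t x‖₊ : ℝ≥0∞) ≤ ENNReal.ofReal (1/(4*π)) *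
      ∫⁻ ω : Metric.sphere (0:R3) 1,
        (ENNReal.ofReal (t * ‖f (x + t • (ω:R3))‖)
          + ENNReal.ofReal (t^2 * ‖fderiv ℝ f (x + t • (ω:R3))‖)) ∂sphereMeasure := by
  set F : Metric.sphere (0:R3) 1 → ℂ := fun ω =>
    f (x + t • (ω:R3)) + t • (fderiv ℝ f (x + t • (ω:R3))) (ω:R3) with hF
  have hc : (‖(1/(4*π) : ℝ)‖₊ : ℝ≥0∞) = ENNReal.ofReal (1/(4*π)) :=
    Real.enorm_eq_ofReal (by positivity)
  have h1 : (‖cosProp f t x‖₊ : ℝ≥0∞)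
      ≤ ENNReal.ofReal (1/(4*π)) * ∫⁻ ω, (‖F ω‖₊ : ℝ≥0∞) ∂sphereMeasure := by
    rw [cosProp, nnnorm_smul, ENNReal.coe_mul, hc]
    exact mul_le_mul_right (enorm_integral_le_lintegral_enorm _) _
  calc ENNReal.ofReal t * (‖cosProp f t x‖₊ : ℝ≥0∞)
      ≤ ENNReal.ofReal t * (ENNReal.ofReal (1/(4*π)) *
          ∫⁻ ω, (‖F ω‖₊ : ℝ≥0∞) ∂sphereMeasure) := mul_le_mul_right h1 _
    _ = ENNReal.ofReal (1/(4*π)) *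
          ∫⁻ ω, ENNReal.ofReal t * (‖F ω‖₊ : ℝ≥0∞) ∂sphereMeasure := by
        rw [lintegral_const_mul' _ _ ENNReal.ofReal_ne_top]
        ring
    _ ≤ _ := by
        refine mul_le_mul_right (lintegral_mono fun ω => ?_) _
        have hω : ‖(ω : R3)‖ = 1 := mem_sphere_zero_iff_norm.1 ω.2
        have hFn : ‖F ω‖ ≤ ‖f (x + t • (ω:R3))‖ + t * ‖fderiv ℝ f (x + t • (ω:R3))‖ := by
          refine (norm_add_le _ _).trans (add_le_add_right ?_ _)
          rw [norm_smul, Real.norm_eq_abs, abs_of_pos ht]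
          refine mul_le_mul_of_nonneg_left ?_ ht.le
          calc ‖(fderiv ℝ f (x + t • (ω:R3))) (ω:R3)‖
              ≤ ‖fderiv ℝ f (x + t • (ω:R3))‖ * ‖(ω:R3)‖ :=
                (fderiv ℝ f (x + t • (ω:R3))).le_opNorm _
            _ = ‖fderiv ℝ f (x + t • (ω:R3))‖ := by rw [hω, mul_one]
        calc ENNReal.ofReal t * (‖F ω‖₊ : ℝ≥0∞)
            = ENNReal.ofReal (t * ‖F ω‖) := by
              rw [ENNReal.ofReal_mul ht.le]; exact congrArg _ (ofReal_norm _).symm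
          _ ≤ ENNReal.ofReal (t * (‖f (x + t • (ω:R3))‖
                + t * ‖fderiv ℝ f (x + t • (ω:R3))‖)) :=
              ENNReal.ofReal_le_ofReal (mul_le_mul_of_nonneg_left hFn ht.le)
          _ = _ := by
              rw [mul_add, ENNReal.ofReal_add (by positivity) (by positivity)]
              congr 2
              ring

lemma part1 (f : R3 → ℂ) (hf : ContDiff ℝ 1 f) (hsupp : HasCompactSupport f) (x : R3) :
    ∫⁻ t in Set.Ioi (0:ℝ), ENNReal.ofReal t * (‖cosProp f t x‖₊ : ℝ≥0∞) ≤
      ENNReal.ofReal (1/(4*π)) * ((∫⁻ y : R3, ENNReal.ofReal (‖f y‖ / ‖x - y‖))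
        + ∫⁻ y : R3, ENNReal.ofReal ‖fderiv ℝ f y‖) := by
  have hDf : Continuous (fderiv ℝ f) := hf.continuous_fderiv one_ne_zero
  set A : ℝ → Metric.sphere (0:R3) 1 → ℝ≥0∞ :=
    fun t ω => ENNReal.ofReal (t * ‖f (x + t • (ω:R3))‖) with hA
  set B : ℝ → Metric.sphere (0:R3) 1 → ℝ≥0∞ :=
    fun t ω => ENNReal.ofReal (t^2 * ‖fderiv ℝ f (x + t • (ω:R3))‖) with hB
  have hc0 : Continuous (fun p : ℝ × Metric.sphere (0:R3) 1 => x + p.1 • (p.2:R3)) := by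
    fun_prop
  have hAc : Continuous (fun p : ℝ × Metric.sphere (0:R3) 1 => A p.1 p.2) :=
    ENNReal.continuous_ofReal.comp (continuous_fst.mul (hf.continuous.norm.comp hc0))
  have hBc : Continuous (fun p : ℝ × Metric.sphere (0:R3) 1 => B p.1 p.2) :=
    ENNReal.continuous_ofReal.comp ((continuous_fst.pow 2).mul (hDf.norm.comp hc0))
  have hswap : AEMeasurable (Function.uncurry fun t ω => A t ω + B t ω)
      (((volume : Measure ℝ).restrict (Set.Ioi 0)).prod sphereMeasure) :=
    ((hAc.add hBc).measurable).aemeasurable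
  have houterA : Measurable (fun ω : Metric.sphere (0:R3) 1 =>
      ∫⁻ t in Set.Ioi (0:ℝ), A t ω ∂volume) :=
    Measurable.lintegral_prod_right'
      (f := fun p : Metric.sphere (0:R3) 1 × ℝ => A p.2 p.1)
      ((hAc.comp continuous_swap).measurable)
  calc ∫⁻ t in Set.Ioi (0:ℝ), ENNReal.ofReal t * (‖cosProp f t x‖₊ : ℝ≥0∞)
      ≤ ∫⁻ t in Set.Ioi (0:ℝ), ENNReal.ofReal (1/(4*π)) *
          ∫⁻ ω, (A t ω + B t ω) ∂sphereMeasure := by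
        refine lintegral_mono_ae ?_
        filter_upwards [ae_restrict_mem measurableSet_Ioi] with t ht
        exact cos_pointwise f hf x ht
    _ = ENNReal.ofReal (1/(4*π)) * ∫⁻ t in Set.Ioi (0:ℝ),
          ∫⁻ ω, (A t ω + B t ω) ∂sphereMeasure :=
        lintegral_const_mul' _ _ ENNReal.ofReal_ne_top
    _ = ENNReal.ofReal (1/(4*π)) * ∫⁻ ω, (∫⁻ t in Set.Ioi (0:ℝ),
          (A t ω + B t ω) ∂volume) ∂sphereMeasure := by
        rw [lintegral_lintegral_swap hswap]
    _ = ENNReal.ofReal (1/(4*π)) * ∫⁻ ω, ((∫⁻ t in Set.Ioi (0:ℝ), A t ω ∂volume)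
          + ∫⁻ t in Set.Ioi (0:ℝ), B t ω ∂volume) ∂sphereMeasure := by
        congr 1
        refine lintegral_congr fun ω => ?_
        exact lintegral_add_left
          ((hAc.comp (continuous_id.prodMk continuous_const)).measurable) _
    _ = ENNReal.ofReal (1/(4*π)) * ((∫⁻ ω, (∫⁻ t in Set.Ioi (0:ℝ), A t ω ∂volume) ∂sphereMeasure)
          + ∫⁻ ω, (∫⁻ t in Set.Ioi (0:ℝ), B t ω ∂volume) ∂sphereMeasure) := by
        rw [lintegral_add_left houterA]
    _ = _ := by rw [J1_eq f hf x, J2_eq f hf x]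


theorem weighted_cosine_reversed_Linfty_L1 (f : R3 → ℂ) (hf : ContDiff ℝ 1 f)
    (hsupp : HasCompactSupport f) :
    ∀ x : R3,
      (∫⁻ t in Set.Ioi (0 : ℝ), ENNReal.ofReal t * (‖cosProp f t x‖₊ : ℝ≥0∞) ≤
        ENNReal.ofReal ((1 / (4 * π)) *
          ((∫ y : R3, ‖f y‖ / ‖x - y‖) + ∫ y : R3, ‖fderiv ℝ f y‖))) ∧
      (1 / (4 * π)) * ((∫ y : R3, ‖f y‖ / ‖x - y‖) + ∫ y : R3, ‖fderiv ℝ f y‖) ≤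
        (1 / (2 * π)) * ∫ y : R3, ‖fderiv ℝ f y‖ := by
  intro x
  have hI1 : 0 ≤ ∫ y : R3, ‖f y‖ / ‖x - y‖ :=
    integral_nonneg fun y => div_nonneg (norm_nonneg _) (norm_nonneg _)
  have hI2 : 0 ≤ ∫ y : R3, ‖fderiv ℝ f y‖ := integral_nonneg fun y => norm_nonneg _
  constructor
  · refine (part1 f hf hsupp x).trans_eq ?_
    rw [lint_pot_eq f hf hsupp x, lint_Df_eq f hf hsupp,
      ← ENNReal.ofReal_add hI1 hI2, ← ENNReal.ofReal_mul (by positivity)]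
  · have hle := pot_le f hf hsupp x
    have hπ : (0:ℝ) < π := Real.pi_pos
    rw [div_mul_eq_mul_div, div_mul_eq_mul_div, one_mul, one_mul,
      div_le_div_iff₀ (by positivity) (by positivity)]
    nlinarith [mul_le_mul_of_nonneg_right hle (le_of_lt hπ)]
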